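/- Let A, B, γ, δ, b ∈ ℂ with A ≠ 0, 2A + B ≠ 0, γ ≠ 0. Set a = γ/(2(2A + B)) and c = (2A + B)(A b² − δ)/(2 A γ). Then the quadratic polynomial u(z) = a z² + b z + c satisfies u''' − B u u'' − A (u')² + γ u + δ = 0 for all z ∈ ℂ. -/
import Mathlib

theorem stmt3 (A B γ δ b : ℂ) (hA : A ≠ 0) (h2AB : 2 * A + B ≠ 0) (hγ : γ ≠ 0)
    (a c : ℂ) (ha : a = γ / (2 * (2 * A + B)))
    (hc : c = (2 * A + B) * (A * b ^ 2 - δ) / (2 * A * γ))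
    (u : ℂ → ℂ) (hu : ∀ z, u z = a * z ^ 2 + b * z + c) :
    ∀ z : ℂ,
      deriv (deriv (deriv u)) z - B * u z * deriv (deriv u) z - A * (deriv u z) ^ 2
        + γ * u z + δ = 0 := by
  have hufun : u = fun z => a * z ^ 2 + b * z + c := funext hu
  have h1 : deriv u = fun z => 2 * a * z + b := by
    funext z
    rw [hufun]
    have : HasDerivAt (fun z : ℂ => a * z ^ 2 + b * z + c) (a * (2 * z) + b) z := by
      have := (((hasDerivAt_pow 2 z).const_mul a).add ((hasDerivAt_id z).const_mul b)).add_const c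
      simpa using this
    rw [this.deriv]; ring
  have h2 : deriv (deriv u) = fun _ => 2 * a := by
    funext z
    rw [h1]
    have : HasDerivAt (fun z : ℂ => 2 * a * z + b) (2 * a) z := by
      simpa using ((hasDerivAt_id z).const_mul (2 * a)).add_const b
    rw [this.deriv]
  have h3 : deriv (deriv (deriv u)) = fun _ => 0 := by
    rw [h2]; funext z; exact deriv_const z _
  intro z
  rw [h3, h2, h1, hu]
  have e1 : 2 * (2 * A + B) * a = γ := by
    rw [ha]; field_simp
  have e2 : 2 * A * γ * c = (2 * A + B) * (A * b ^ 2 - δ) := by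
    rw [hc]; field_simp
  have hABγ : A * γ ≠ 0 := mul_ne_zero hA hγ
  apply mul_left_cancel₀ (mul_ne_zero (mul_ne_zero (two_ne_zero) hA) hγ : (2:ℂ) * A * γ ≠ 0)
  rw [mul_zero]
  linear_combination (-(2 * A * γ * (a * z ^ 2 + b * z)) - B * (A * b ^ 2 - δ)) * e1 + (γ - 2 * a * B) * e2
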